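/- (Denominator orthogonality on the torus) Let $(d,k,S,\varepsilon)$ be an $(r,c)$-good major arc parameter set, and for each $A \subseteq S$ with $|A| \leq k$, let $\Sigma_A = \Sigma_{\subseteq A} \setminus \bigcup_{B \subsetneq A} \Sigma_{\subseteq B}$. Suppose $A_1, \dots, A_{2r}$ are subsets of $S$ of cardinality at most $k$ containing a nonce (an element of $S$ in exactly one $A_j$). Then for any $\alpha_j \in \Sigma_{A_j}$ and $\theta_j \in [-\varepsilon,\varepsilon]^d$ for $j = 1, \dots, 2r$, one has $\sum_{j=1}^r (\alpha_j + \theta_j) - \sum_{j=r+1}^{2r} (\alpha_j + \theta_j) \neq 0$ in $\mathbb{T}^d$. -/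
import Mathlib

open Finset

private lemma nsmul_zero_of_dvd {x : AddCircle (1 : ℝ)} {m n : ℕ} (h : m ∣ n)
    (hx : m • x = 0) : n • x = 0 := by
  rw [← addOrderOf_dvd_iff_nsmul_eq_zero] at hx ⊢
  exact hx.trans h

private lemma gcd_nsmul_zero {x : AddCircle (1 : ℝ)} {m n : ℕ}
    (hm : m • x = 0) (hn : n • x = 0) : Nat.gcd m n • x = 0 := by
  rw [← addOrderOf_dvd_iff_nsmul_eq_zero] at hm hn ⊢
  exact Nat.dvd_gcd hm hn

/-- Key coordinatewise lemma: if `q₀` is a nonce in `A j₀` and the torsion sums agree,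
then the product over `A j₀` minus the nonce already kills `α j₀`. -/
private lemma key_lemma (d r : ℕ)
    (S : Finset ℕ) (hScop : (S : Set ℕ).Pairwise Nat.Coprime)
    (A B : Fin r → Finset ℕ) (hA : ∀ j, A j ⊆ S) (hB : ∀ j, B j ⊆ S)
    (q₀ : ℕ) (hq₀S : q₀ ∈ S) (j₀ : Fin r) (hq₀A : q₀ ∈ A j₀)
    (hq₀A' : ∀ j, j ≠ j₀ → q₀ ∉ A j) (hq₀B : ∀ j, q₀ ∉ B j)
    (α β : Fin r → Fin d → AddCircle (1 : ℝ))
    (hα : ∀ j, (∏ q ∈ A j, q) • α j = 0) (hβ : ∀ j, (∏ q ∈ B j, q) • β j = 0)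
    (heq : ∀ i, ∑ j, α j i = ∑ j, β j i) :
    (∏ q ∈ (A j₀).erase q₀, q) • α j₀ = 0 := by
  -- coprimality of q₀ with everything else appearing
  have hcop : ∀ q ∈ S, q ≠ q₀ → Nat.Coprime q₀ q := by
    intro q hq hne
    exact (hScop hq₀S hq (Ne.symm hne))
  set P' : ℕ := ∏ q ∈ (A j₀).erase q₀, q with hP'
  set M : ℕ := P' * ((∏ j ∈ Finset.univ.erase j₀, ∏ q ∈ A j, q) *
      ∏ j : Fin r, ∏ q ∈ B j, q) with hM
  have hMcop : Nat.Coprime q₀ M := by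
    apply Nat.Coprime.mul_right
    · exact Nat.Coprime.prod_right fun q hq => hcop q (hA j₀ (Finset.erase_subset _ _ hq))
        (Finset.ne_of_mem_erase hq)
    apply Nat.Coprime.mul_right
    · exact Nat.Coprime.prod_right fun j hj => Nat.Coprime.prod_right fun q hq =>
        hcop q (hA j hq) (fun h => hq₀A' j (Finset.ne_of_mem_erase hj) (h ▸ hq))
    · exact Nat.Coprime.prod_right fun j _ => Nat.Coprime.prod_right fun q hq =>
        hcop q (hB j hq) (fun h => hq₀B j (h ▸ hq))
  funext i
  -- M kills α j i for j ≠ j₀, and kills β j i for all j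
  have hMα : ∀ j, j ≠ j₀ → M • α j i = 0 := by
    intro j hj
    have hdvd : (∏ q ∈ A j, q) ∣ M := by
      refine Dvd.dvd.mul_left ?_ P'
      exact Dvd.dvd.mul_right
        (Finset.dvd_prod_of_mem _ (Finset.mem_erase.2 ⟨hj, Finset.mem_univ j⟩)) _
    exact nsmul_zero_of_dvd hdvd (congrFun (hα j) i)
  have hMβ : ∀ j, M • β j i = 0 := by
    intro j
    have hdvd : (∏ q ∈ B j, q) ∣ M :=
      Dvd.dvd.mul_left (Dvd.dvd.mul_left (Finset.dvd_prod_of_mem _ (Finset.mem_univ j)) _) P'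
    exact nsmul_zero_of_dvd hdvd (congrFun (hβ j) i)
  have hMsum : M • (∑ j, α j i) = 0 := by
    rw [heq i, Finset.smul_sum]
    exact Finset.sum_eq_zero fun j _ => hMβ j
  have hMα₀ : M • α j₀ i = 0 := by
    rw [Finset.smul_sum] at hMsum
    rwa [Finset.sum_eq_single_of_mem j₀ (Finset.mem_univ j₀)
      (fun j _ hj => hMα j hj)] at hMsum
  -- the full product also kills α j₀ i
  have hPα₀ : (q₀ * P') • α j₀ i = 0 := by
    rw [hP', Finset.mul_prod_erase (A j₀) (fun q => q) hq₀A]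
    exact congrFun (hα j₀) i
  have hg : Nat.gcd M (q₀ * P') • α j₀ i = 0 := gcd_nsmul_zero hMα₀ hPα₀
  have hgP' : Nat.gcd M (q₀ * P') ∣ P' := by
    have h1 : Nat.Coprime (Nat.gcd M (q₀ * P')) q₀ :=
      (Nat.Coprime.coprime_dvd_right (Nat.gcd_dvd_left _ _) hMcop).symm
    exact h1.dvd_of_dvd_mul_left (Nat.gcd_dvd_right _ _)
  exact nsmul_zero_of_dvd hgP' hg

theorem denominator_orthogonality
    (d k r : ℕ) (hd : 1 ≤ d) (hk : 1 ≤ k) (hr : 1 ≤ r)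
    (c ε : ℝ) (hc0 : 0 < c) (hc1 : c < 1) (hε : 0 < ε)
    (S : Finset ℕ) (hS1 : ∀ q ∈ S, 0 < q) (hScop : (S : Set ℕ).Pairwise Nat.Coprime)
    (qmax : ℕ) (hq1 : 1 ≤ qmax) (hqmax : ∀ q ∈ S, q ≤ qmax)
    (hgood : ε < c / (2 * r * (qmax : ℝ) ^ (2 * r * k)))
    (A B : Fin r → Finset ℕ) (hA : ∀ j, A j ⊆ S ∧ (A j).card ≤ k)
    (hB : ∀ j, B j ⊆ S ∧ (B j).card ≤ k)
    (hnonce : ∃ q ∈ S, (Finset.univ.filter fun j => q ∈ A j).card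
        + (Finset.univ.filter fun j => q ∈ B j).card = 1)
    (α β : Fin r → Fin d → AddCircle (1 : ℝ))
    (hα : ∀ j, (∏ q ∈ A j, q) • α j = 0 ∧
      ∀ C : Finset ℕ, C ⊂ A j → ¬ ((∏ q ∈ C, q) • α j = 0))
    (hβ : ∀ j, (∏ q ∈ B j, q) • β j = 0 ∧
      ∀ C : Finset ℕ, C ⊂ B j → ¬ ((∏ q ∈ C, q) • β j = 0))
    (θ η : Fin r → Fin d → ℝ)
    (hθ : ∀ j i, |θ j i| ≤ ε) (hη : ∀ j i, |η j i| ≤ ε) :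
    (∑ j, (α j + fun i => ((θ j i : ℝ) : AddCircle (1 : ℝ)))) -
      (∑ j, (β j + fun i => ((η j i : ℝ) : AddCircle (1 : ℝ)))) ≠ 0 := by
  intro h
  -- the common annihilator
  set N : ℕ := (∏ j : Fin r, ∏ q ∈ A j, q) * (∏ j : Fin r, ∏ q ∈ B j, q) with hN
  have hprodpos : ∀ (C : Fin r → Finset ℕ), (∀ j, C j ⊆ S) →
      0 < ∏ j : Fin r, ∏ q ∈ C j, q := by
    intro C hC
    exact Finset.prod_pos fun j _ => Finset.prod_pos fun q hq => hS1 q (hC j hq)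
  have hNpos : 0 < N :=
    Nat.mul_pos (hprodpos A fun j => (hA j).1) (hprodpos B fun j => (hB j).1)
  have hprodle : ∀ (C : Fin r → Finset ℕ), (∀ j, C j ⊆ S ∧ (C j).card ≤ k) →
      (∏ j : Fin r, ∏ q ∈ C j, q) ≤ qmax ^ (r * k) := by
    intro C hC
    calc (∏ j : Fin r, ∏ q ∈ C j, q) ≤ ∏ j : Fin r, qmax ^ k := by
          refine Finset.prod_le_prod' fun j _ => ?_
          calc (∏ q ∈ C j, q) ≤ qmax ^ (C j).card :=
                Finset.prod_le_pow_card _ _ _ fun q hq => hqmax q ((hC j).1 hq)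
            _ ≤ qmax ^ k := Nat.pow_le_pow_right hq1 (hC j).2
      _ = qmax ^ (r * k) := by
          rw [Finset.prod_const, Finset.card_univ, Fintype.card_fin, ← pow_mul,
            mul_comm k r]
  have hNle : N ≤ qmax ^ (2 * r * k) := by
    calc N ≤ qmax ^ (r * k) * qmax ^ (r * k) :=
        Nat.mul_le_mul (hprodle A hA) (hprodle B hB)
      _ = qmax ^ (2 * r * k) := by rw [← pow_add]; ring_nf
  -- pointwise sums of α and β agree
  have heq : ∀ i, ∑ j, α j i = ∑ j, β j i := by
    intro i
    have h' := congrFun h i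
    simp only [Pi.sub_apply, Finset.sum_apply, Pi.add_apply, Pi.zero_apply] at h'
    set T : ℝ := (∑ j, θ j i) - ∑ j, η j i with hT
    have hXT : ((∑ j, α j i) - ∑ j, β j i) + (T : AddCircle (1 : ℝ)) = 0 := by
      have hcast : ∀ (f : Fin r → ℝ),
          ((∑ j, f j : ℝ) : AddCircle (1 : ℝ)) = ∑ j, ((f j : ℝ) : AddCircle (1 : ℝ)) := by
        intro f
        exact map_sum (QuotientAddGroup.mk' _) f Finset.univ
      have hsubcast : ∀ x y : ℝ, ((x - y : ℝ) : AddCircle (1:ℝ)) = (x : AddCircle (1:ℝ)) - y :=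
        fun _ _ => rfl
      rw [hT, hsubcast, hcast, hcast]
      rw [Finset.sum_add_distrib, Finset.sum_add_distrib] at h'
      rw [← h']
      abel
    -- multiply by N
    have hNX : N • ((∑ j, α j i) - ∑ j, β j i) = 0 := by
      rw [smul_sub, Finset.smul_sum, Finset.smul_sum]
      have hA0 : ∀ j : Fin r, N • α j i = 0 := fun j =>
        nsmul_zero_of_dvd (Dvd.dvd.mul_right (Finset.dvd_prod_of_mem _ (Finset.mem_univ j)) _)
          (congrFun (hα j).1 i)
      have hB0 : ∀ j : Fin r, N • β j i = 0 := fun j =>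
        nsmul_zero_of_dvd (Dvd.dvd.mul_left (Finset.dvd_prod_of_mem _ (Finset.mem_univ j)) _)
          (congrFun (hβ j).1 i)
      rw [Finset.sum_eq_zero fun j _ => hA0 j, Finset.sum_eq_zero fun j _ => hB0 j, sub_zero]
    have hNT : ((N : ℝ) * T : ℝ) = (0 : AddCircle (1 : ℝ)) := by
      have := congrArg (fun x => N • x) hXT
      simp only [smul_add, hNX, smul_zero, zero_add] at this
      rw [← this]
      norm_cast
      rw [← nsmul_eq_mul]
      rfl
    -- bound |N * T| < 1
    have hTbound : |T| ≤ 2 * r * ε := by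
      rw [hT]
      have h1 : |∑ j, θ j i| ≤ r * ε := by
        calc |∑ j, θ j i| ≤ ∑ j, |θ j i| := Finset.abs_sum_le_sum_abs _ _
          _ ≤ ∑ _j : Fin r, ε := Finset.sum_le_sum fun j _ => hθ j i
          _ = r * ε := by simp [mul_comm]
      have h2 : |∑ j, η j i| ≤ r * ε := by
        calc |∑ j, η j i| ≤ ∑ j, |η j i| := Finset.abs_sum_le_sum_abs _ _
          _ ≤ ∑ _j : Fin r, ε := Finset.sum_le_sum fun j _ => hη j i
          _ = r * ε := by simp [mul_comm]
      calc |(∑ j, θ j i) - ∑ j, η j i| ≤ |∑ j, θ j i| + |∑ j, η j i| := abs_sub _ _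
        _ ≤ r * ε + r * ε := add_le_add h1 h2
        _ = 2 * r * ε := by ring
    have hden : (0 : ℝ) < 2 * r * (qmax : ℝ) ^ (2 * r * k) := by
      have : (0:ℝ) < (qmax : ℝ) ^ (2 * r * k) := by positivity
      have hr' : (0:ℝ) < (r : ℝ) := by exact_mod_cast hr
      positivity
    have hεc : 2 * r * (qmax : ℝ) ^ (2 * r * k) * ε < c := by
      rw [lt_div_iff₀ hden] at hgood
      linarith [hgood]
    have hNTbound : |(N : ℝ) * T| < 1 := by
      have hN1 : (N : ℝ) ≤ (qmax : ℝ) ^ (2 * r * k) := by exact_mod_cast hNle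
      have hN0 : (0 : ℝ) ≤ (N : ℝ) := Nat.cast_nonneg N
      calc |(N : ℝ) * T| = (N : ℝ) * |T| := by rw [abs_mul, abs_of_nonneg hN0]
        _ ≤ (qmax : ℝ) ^ (2 * r * k) * (2 * r * ε) := by
            apply mul_le_mul hN1 hTbound (abs_nonneg T)
            positivity
        _ < c := by nlinarith [hεc]
        _ < 1 := hc1
    -- conclude T = 0
    have hT0 : T = 0 := by
      rcases (AddCircle.coe_eq_zero_iff (1:ℝ)).1 hNT with ⟨n, hn⟩
      simp only [zsmul_eq_mul, mul_one] at hn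
      have hnabs : |(n : ℝ)| < 1 := hn ▸ hNTbound
      have hn0 : n = 0 := by
        by_contra hne
        have : (1 : ℝ) ≤ |(n : ℝ)| := by
          rw [← Int.cast_abs]
          exact_mod_cast Int.one_le_abs hne
        linarith
      have : (N : ℝ) * T = 0 := by rw [← hn, hn0, Int.cast_zero]
      have hNne : (N : ℝ) ≠ 0 := by positivity
      exact (mul_eq_zero.1 this).resolve_left hNne
    rw [hT0] at hXT
    have : ((0:ℝ) : AddCircle (1:ℝ)) = 0 := by norm_cast
    rw [this, add_zero, sub_eq_zero] at hXT
    exact hXT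
  -- use the nonce to derive a contradiction
  obtain ⟨q₀, hq₀S, hcard⟩ := hnonce
  rcases Nat.add_eq_one_iff.1 hcard with ⟨hA1, hB1⟩ | ⟨hA1, hB1⟩
  · -- nonce is in some B j₀
    obtain ⟨j₀, hj₀⟩ := Finset.card_eq_one.1 hB1
    have hq₀B : q₀ ∈ B j₀ := by
      have : j₀ ∈ Finset.univ.filter fun j => q₀ ∈ B j := by
        rw [hj₀]; exact Finset.mem_singleton_self j₀
      exact (Finset.mem_filter.1 this).2
    have hq₀B' : ∀ j, j ≠ j₀ → q₀ ∉ B j := by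
      intro j hj hmem
      apply hj
      have : j ∈ Finset.univ.filter fun j => q₀ ∈ B j :=
        Finset.mem_filter.2 ⟨Finset.mem_univ j, hmem⟩
      rw [hj₀] at this
      exact Finset.mem_singleton.1 this
    have hq₀A : ∀ j, q₀ ∉ A j := by
      intro j hmem
      have : j ∈ Finset.univ.filter fun j => q₀ ∈ A j :=
        Finset.mem_filter.2 ⟨Finset.mem_univ j, hmem⟩
      rw [Finset.card_eq_zero.1 hA1] at this
      exact absurd this (Finset.notMem_empty j)
    have hkey := key_lemma d r S hScop B A (fun j => (hB j).1) (fun j => (hA j).1)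
      q₀ hq₀S j₀ hq₀B hq₀B' hq₀A β α (fun j => (hβ j).1) (fun j => (hα j).1)
      (fun i => (heq i).symm)
    exact (hβ j₀).2 _ (Finset.erase_ssubset hq₀B) hkey
  · -- nonce is in some A j₀
    obtain ⟨j₀, hj₀⟩ := Finset.card_eq_one.1 hA1
    have hq₀A : q₀ ∈ A j₀ := by
      have : j₀ ∈ Finset.univ.filter fun j => q₀ ∈ A j := by
        rw [hj₀]; exact Finset.mem_singleton_self j₀
      exact (Finset.mem_filter.1 this).2
    have hq₀A' : ∀ j, j ≠ j₀ → q₀ ∉ A j := by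
      intro j hj hmem
      apply hj
      have : j ∈ Finset.univ.filter fun j => q₀ ∈ A j :=
        Finset.mem_filter.2 ⟨Finset.mem_univ j, hmem⟩
      rw [hj₀] at this
      exact Finset.mem_singleton.1 this
    have hq₀B : ∀ j, q₀ ∉ B j := by
      intro j hmem
      have : j ∈ Finset.univ.filter fun j => q₀ ∈ B j :=
        Finset.mem_filter.2 ⟨Finset.mem_univ j, hmem⟩
      rw [Finset.card_eq_zero.1 hB1] at this
      exact absurd this (Finset.notMem_empty j)
    have hkey := key_lemma d r S hScop A B (fun j => (hA j).1) (fun j => (hB j).1)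
      q₀ hq₀S j₀ hq₀A hq₀A' hq₀B α β (fun j => (hα j).1) (fun j => (hβ j).1) heq
    exact (hα j₀).2 _ (Finset.erase_ssubset hq₀A) hkey
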